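/- arXiv:1202.0514 — 2 statements merged into one kernel-verified Lean document; each statement's English description precedes it below -/
import Mathlib

section
/- For the bivariate Smith model with parameter a > 0, the Pickands dependence function A(w_1,w_2) = w_1·Φ(a/2 + (1/a)log(w_1/w_2)) + w_2·Φ(a/2 + (1/a)log(w_2/w_1)) on the simplex {(w_1,w_2) : w_1,w_2 ≥ 0, w_1+w_2 = 1} satisfies the Pickands bounds max(w_1,w_2) ≤ A(w_1,w_2) ≤ 1 for all w_1,w_2 ∈ (0,1) with w_1 + w_2 = 1, and A(1,0) = A(0,1) = 1 (in the limiting sense). -/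
open Filter

/-- The standard normal cumulative distribution function. -/
noncomputable def Phi (x : ℝ) : ℝ :=
  (Real.sqrt (2 * Real.pi))⁻¹ * ∫ t in Set.Iic x, Real.exp (-t ^ 2 / 2)

/-- The Pickands dependence function of the bivariate Smith model with parameter `a`. -/
noncomputable def smithPickands (a w₁ w₂ : ℝ) : ℝ :=
  w₁ * Phi (a / 2 + (1 / a) * Real.log (w₁ / w₂)) +
    w₂ * Phi (a / 2 + (1 / a) * Real.log (w₂ / w₁))

open MeasureTheory Set Real

lemma gauss_integrable : Integrable (fun t : ℝ => Real.exp (-t ^ 2 / 2)) := by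
  have h := integrable_exp_neg_mul_sq (by norm_num : (0:ℝ) < 1/2)
  refine h.congr (Filter.Eventually.of_forall fun x => ?_)
  ring_nf

lemma gauss_total : (∫ t : ℝ, Real.exp (-t ^ 2 / 2)) = Real.sqrt (2 * Real.pi) := by
  have h := integral_gaussian (1/2 : ℝ)
  have h2 : (∫ t : ℝ, Real.exp (-t ^ 2 / 2)) = ∫ t : ℝ, Real.exp (-(1/2) * t ^ 2) := by
    congr 1; funext t; ring_nf
  rw [h2, h]
  rw [show Real.pi / (1/2) = 2 * Real.pi by ring]

lemma sqrt_two_pi_pos : 0 < Real.sqrt (2 * Real.pi) :=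
  Real.sqrt_pos.mpr (by positivity)

lemma Phi_nonneg (x : ℝ) : 0 ≤ Phi x := by
  unfold Phi
  apply mul_nonneg (by positivity)
  exact setIntegral_nonneg measurableSet_Iic fun t _ => (Real.exp_pos _).le

lemma Phi_le_one (x : ℝ) : Phi x ≤ 1 := by
  unfold Phi
  rw [inv_mul_le_iff₀ sqrt_two_pi_pos, mul_one]
  rw [← gauss_total]
  exact setIntegral_le_integral gauss_integrable
    (Filter.Eventually.of_forall fun t => (Real.exp_pos _).le)

lemma Phi_add_neg (x : ℝ) : Phi x + Phi (-x) = 1 := by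
  have heven : (∫ t in Set.Iic (-x), Real.exp (-t ^ 2 / 2))
      = ∫ t in Set.Ioi x, Real.exp (-t ^ 2 / 2) := by
    have h := integral_comp_neg_Iic (-x) (fun t => Real.exp (-t ^ 2 / 2))
    rw [neg_neg] at h
    rw [← h]
    refine setIntegral_congr_fun measurableSet_Iic fun t _ => ?_
    rw [neg_sq]
  have hsplit : (∫ t in Set.Iic x, Real.exp (-t ^ 2 / 2))
      + (∫ t in Set.Ioi x, Real.exp (-t ^ 2 / 2)) = Real.sqrt (2 * Real.pi) := by
    rw [← gauss_total]
    rw [← setIntegral_union (Set.Iic_disjoint_Ioi le_rfl) measurableSet_Ioi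
      gauss_integrable.integrableOn gauss_integrable.integrableOn,
      Set.Iic_union_Ioi, setIntegral_univ]
  unfold Phi
  rw [heven, ← mul_add, hsplit, inv_mul_cancel₀ sqrt_two_pi_pos.ne']

lemma integrable_comp_add (f : ℝ → ℝ) (hf : Integrable f) (d : ℝ) :
    Integrable (fun x => f (x + d)) := by
  have A : MeasurableEmbedding (fun x : ℝ => x + d) :=
    (Homeomorph.addRight d).isClosedEmbedding.measurableEmbedding
  rw [← map_add_right_eq_self volume d] at hf
  exact A.integrable_map_iff.mp hf

lemma setIntegral_Iic_add (f : ℝ → ℝ) (b d : ℝ) :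
    (∫ x in Set.Iic b, f (x + d)) = ∫ x in Set.Iic (b + d), f x := by
  have A : MeasurableEmbedding (fun x : ℝ => x + d) :=
    (Homeomorph.addRight d).isClosedEmbedding.measurableEmbedding
  have h := A.setIntegral_map (μ := volume) f (Set.Iic (b + d))
  rw [map_add_right_eq_self volume d] at h
  have hpre : (fun x : ℝ => x + d) ⁻¹' Set.Iic (b + d) = Set.Iic b := by
    ext t; simp
  rw [h, hpre]

/-- The key inequality: `exp (a*c) * Φ(-(a/2) - c) ≤ Φ(a/2 - c)`. -/
lemma key_ineq (a c : ℝ) (ha : 0 < a) :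
    Real.exp (a * c) * Phi (-(a/2) - c) ≤ Phi (a/2 - c) := by
  unfold Phi
  rw [show Real.exp (a*c) * ((Real.sqrt (2 * Real.pi))⁻¹ * ∫ t in Set.Iic (-(a/2) - c), Real.exp (-t ^ 2 / 2))
    = (Real.sqrt (2 * Real.pi))⁻¹ * (Real.exp (a*c) * ∫ t in Set.Iic (-(a/2) - c), Real.exp (-t ^ 2 / 2)) by ring]
  apply mul_le_mul_of_nonneg_left _ (by positivity)
  have htrans : (∫ t in Set.Iic (-(a/2) - c), Real.exp (-t ^ 2 / 2))
      = ∫ s in Set.Iic (a/2 - c), Real.exp (-(s + -a) ^ 2 / 2) := by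
    rw [setIntegral_Iic_add (fun t => Real.exp (-t ^ 2 / 2)) (a/2 - c) (-a)]
    congr 1; ring
  rw [htrans, ← integral_const_mul]
  apply setIntegral_mono_on
  · exact ((integrable_comp_add (fun t => Real.exp (-t ^ 2 / 2))
      gauss_integrable (-a)).const_mul _).integrableOn
  · exact gauss_integrable.integrableOn
  · exact measurableSet_Iic
  · intro s hs
    rw [← Real.exp_add]
    apply Real.exp_le_exp.mpr
    have hs' : s ≤ a/2 - c := hs
    nlinarith

/-- Lower bound: for positive `u, v`, `u ≤ smithPickands a u v`. -/
lemma smith_lower (a u v : ℝ) (ha : 0 < a) (hu : 0 < u) (hv : 0 < v) :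
    u ≤ smithPickands a u v := by
  set c : ℝ := (1/a) * Real.log (u/v) with hc
  have hyc : a / 2 + (1/a) * Real.log (v/u) = a/2 - c := by
    rw [hc, Real.log_div hv.ne' hu.ne', Real.log_div hu.ne' hv.ne']
    ring
  have hexp : Real.exp (a * c) = u / v := by
    rw [hc, show a * ((1/a) * Real.log (u/v)) = Real.log (u/v) by field_simp]
    exact Real.exp_log (div_pos hu hv)
  have hkey := key_ineq a c ha
  rw [hexp] at hkey
  have h1 : u * Phi (-(a/2) - c) ≤ v * Phi (a/2 - c) := by
    have h2 := mul_le_mul_of_nonneg_left hkey hv.le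
    rw [← mul_assoc, mul_div_cancel₀ _ hv.ne'] at h2
    linarith
  have hsum := Phi_add_neg (a/2 + c)
  have hneg : -(a/2 + c) = -(a/2) - c := by ring
  rw [hneg] at hsum
  unfold smithPickands
  rw [hyc]
  have hxc : a / 2 + 1 / a * Real.log (u / v) = a/2 + c := by rw [hc]
  rw [hxc]
  nlinarith [Phi_nonneg (a/2 + c), Phi_nonneg (a/2 - c)]

lemma smith_comm (a u v : ℝ) : smithPickands a u v = smithPickands a v u := by
  unfold smithPickands; ring

lemma phi_tendsto_atTop : Tendsto Phi atTop (nhds 1) := by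
  have hcover : AECover (volume : Measure ℝ) atTop fun b : ℝ => Set.Iic b :=
    aecover_Iic tendsto_id
  have h := hcover.integral_tendsto_of_countably_generated gauss_integrable
  rw [gauss_total] at h
  have h2 := h.const_mul (Real.sqrt (2 * Real.pi))⁻¹
  rw [inv_mul_cancel₀ sqrt_two_pi_pos.ne'] at h2
  exact h2

lemma log_ratio_tendsto (a : ℝ) (ha : 0 < a) :
    Tendsto (fun w : ℝ => a / 2 + (1/a) * Real.log ((1 - w) / w))
      (nhdsWithin 0 (Set.Ioi 0)) atTop := by
  have h1 : Tendsto (fun w : ℝ => Real.log (1 - w)) (nhdsWithin 0 (Set.Ioi 0)) (nhds 0) := by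
    have hb : Tendsto (fun w : ℝ => 1 - w) (nhdsWithin 0 (Set.Ioi 0)) (nhds 1) := by
      have hcont : Continuous (fun w : ℝ => 1 - w) := by continuity
      have := (hcont.tendsto 0).mono_left (nhdsWithin_le_nhds (s := Set.Ioi (0:ℝ)))
      simpa using this
    have hlog : Tendsto Real.log (nhds (1:ℝ)) (nhds 0) := by
      have := (Real.continuousAt_log one_ne_zero).tendsto
      simpa using this
    exact hlog.comp hb
  have h2 : Tendsto (fun w : ℝ => -Real.log w) (nhdsWithin 0 (Set.Ioi 0)) atTop :=
    tendsto_neg_atTop_iff.mpr Real.tendsto_log_nhdsGT_zero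
  have h3 : Tendsto (fun w : ℝ => Real.log (1 - w) + -Real.log w)
      (nhdsWithin 0 (Set.Ioi 0)) atTop := h1.add_atTop h2
  have h4 : Tendsto (fun w : ℝ => (1/a) * (Real.log (1 - w) + -Real.log w))
      (nhdsWithin 0 (Set.Ioi 0)) atTop := h3.const_mul_atTop (by positivity)
  have h5 := tendsto_atTop_add_const_left (nhdsWithin (0:ℝ) (Set.Ioi 0)) (a/2) h4
  refine h5.congr' ?_
  have hmem : ∀ᶠ w in nhdsWithin (0:ℝ) (Set.Ioi 0), w ∈ Set.Ioo (0:ℝ) 1 := by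
    filter_upwards [self_mem_nhdsWithin,
      eventually_nhdsWithin_of_eventually_nhds (eventually_lt_nhds (by norm_num : (0:ℝ) < 1))]
      with w hw hw2
    exact ⟨hw, hw2⟩
  filter_upwards [hmem] with w hw
  rw [Real.log_div (by linarith [hw.2] : (1:ℝ) - w ≠ 0) (ne_of_gt hw.1)]
  ring

lemma smith_tendsto_zero (a : ℝ) (ha : 0 < a) :
    Tendsto (fun w₁ => smithPickands a w₁ (1 - w₁)) (nhdsWithin 0 (Set.Ioi 0)) (nhds 1) := by
  have hterm1 : Tendsto (fun w : ℝ => w * Phi (a / 2 + (1 / a) * Real.log (w / (1 - w))))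
      (nhdsWithin 0 (Set.Ioi 0)) (nhds 0) := by
    apply tendsto_of_tendsto_of_tendsto_of_le_of_le' tendsto_const_nhds
      (tendsto_id.mono_left nhdsWithin_le_nhds)
    · filter_upwards [self_mem_nhdsWithin] with w (hw : 0 < w)
      exact mul_nonneg hw.le (Phi_nonneg _)
    · filter_upwards [self_mem_nhdsWithin] with w (hw : 0 < w)
      calc w * Phi (a / 2 + (1 / a) * Real.log (w / (1 - w)))
          ≤ w * 1 := mul_le_mul_of_nonneg_left (Phi_le_one _) hw.le
        _ = w := mul_one w
  have hterm2 : Tendsto (fun w : ℝ => (1 - w) * Phi (a / 2 + (1 / a) * Real.log ((1 - w) / w)))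
      (nhdsWithin 0 (Set.Ioi 0)) (nhds 1) := by
    have hA : Tendsto (fun w : ℝ => (1 - w)) (nhdsWithin 0 (Set.Ioi 0)) (nhds 1) := by
      have hcont : Continuous (fun w : ℝ => 1 - w) := by continuity
      have := (hcont.tendsto 0).mono_left (nhdsWithin_le_nhds (s := Set.Ioi (0:ℝ)))
      simpa using this
    have hB : Tendsto (fun w : ℝ => Phi (a / 2 + (1/a) * Real.log ((1 - w) / w)))
        (nhdsWithin 0 (Set.Ioi 0)) (nhds 1) :=
      phi_tendsto_atTop.comp (log_ratio_tendsto a ha)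
    have := hA.mul hB
    simpa using this
  have := hterm1.add hterm2
  rw [zero_add] at this
  exact this.congr fun w => by simp [smithPickands]

/-- The bivariate Smith Pickands dependence function satisfies the Pickands bounds
`max(w₁,w₂) ≤ A(w₁,w₂) ≤ 1` on the interior of the simplex, and `A(1,0) = A(0,1) = 1`
in the limiting sense. -/
theorem smith_pickands_bounds (a : ℝ) (ha : 0 < a) :
    (∀ w₁ ∈ Set.Ioo (0:ℝ) 1,
      max w₁ (1 - w₁) ≤ smithPickands a w₁ (1 - w₁) ∧ smithPickands a w₁ (1 - w₁) ≤ 1) ∧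
    Tendsto (fun w₁ => smithPickands a w₁ (1 - w₁)) (nhdsWithin 0 (Set.Ioi 0)) (nhds 1) ∧
    Tendsto (fun w₁ => smithPickands a w₁ (1 - w₁)) (nhdsWithin 1 (Set.Iio 1)) (nhds 1) := by
  refine ⟨?_, smith_tendsto_zero a ha, ?_⟩
  · intro w₁ hw
    obtain ⟨hw0, hw1⟩ := hw
    have hv : 0 < 1 - w₁ := by linarith
    constructor
    · apply max_le
      · exact smith_lower a w₁ (1 - w₁) ha hw0 hv
      · rw [smith_comm]
        exact smith_lower a (1 - w₁) w₁ ha hv hw0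
    · unfold smithPickands
      have h1 := Phi_le_one (a / 2 + (1 / a) * Real.log (w₁ / (1 - w₁)))
      have h2 := Phi_le_one (a / 2 + (1 / a) * Real.log ((1 - w₁) / w₁))
      have h3 := Phi_nonneg (a / 2 + (1 / a) * Real.log (w₁ / (1 - w₁)))
      have h4 := Phi_nonneg (a / 2 + (1 / a) * Real.log ((1 - w₁) / w₁))
      nlinarith
  · have hmap : Tendsto (fun w : ℝ => 1 - w) (nhdsWithin 1 (Set.Iio 1))
        (nhdsWithin 0 (Set.Ioi 0)) := by
      rw [tendsto_nhdsWithin_iff]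
      constructor
      · have hcont : Continuous (fun w : ℝ => 1 - w) := by continuity
        have := (hcont.tendsto 1).mono_left (nhdsWithin_le_nhds (s := Set.Iio (1:ℝ)))
        simpa using this
      · filter_upwards [self_mem_nhdsWithin] with w (hw : w < 1)
        exact sub_pos.mpr hw
    have := (smith_tendsto_zero a ha).comp hmap
    refine this.congr fun w => ?_
    show smithPickands a (1 - w) (1 - (1 - w)) = smithPickands a w (1 - w)
    rw [show 1 - (1 - w) = w by ring, smith_comm]
end

section
/- Let Λ_B = -b·A_{θ_0}(w_B)²·∫₀¹ ℂ(u^{w_B}) u^{-1} du, where ℂ is a stochastic process with E{ℂ(u)·𝕎} = Ċ_{θ_0}(u) for all u ∈ [0,1]^d, for some random vector 𝕎 ∈ ℝ^p. Assume the dominated-convergence hypothesis (A3) holds (locally uniform integrable bounds on Ċ_θ(u^w)/u) and that θ ↦ Ċ_θ is continuous, and that ∫₀¹ C_θ(u^{w_B}) u^{-1} du = 1/A_θ(w_B) for all θ in a neighborhood of θ_0. Then E(Λ_B·𝕎) = b·∇A_{θ_0}(w_B) = ∇ξ_{B,θ_0}, where ∇ denotes the gradient with respect to θ and ξ_{B,θ}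 = b·A_θ(w_B). -/
open MeasureTheory

/-- The continuous linear map `v ↦ Σᵢ gᵢ vᵢ` associated with a gradient vector `g`. -/
noncomputable def gradCLM {p : ℕ} (v : Fin p → ℝ) : (Fin p → ℝ) →L[ℝ] ℝ :=
  ∑ i, v i • ContinuousLinearMap.proj i

lemma gradCLM_apply {p : ℕ} (v x : Fin p → ℝ) : gradCLM v x = ∑ i, v i * x i := by
  simp [gradCLM, smul_eq_mul]

lemma gradCLM_single {p : ℕ} (v : Fin p → ℝ) (i : Fin p) :
    gradCLM v (Pi.single i 1) = v i := by
  rw [gradCLM_apply]; simp [Pi.single_apply]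

lemma gradCLM_norm_le {p : ℕ} (v : Fin p → ℝ) : ‖gradCLM v‖ ≤ ∑ i, |v i| := by
  refine ContinuousLinearMap.opNorm_le_bound _
    (Finset.sum_nonneg fun i _ => abs_nonneg _) fun x => ?_
  rw [gradCLM_apply]
  calc ‖∑ i, v i * x i‖ ≤ ∑ i, ‖v i * x i‖ := norm_sum_le _ _
    _ ≤ ∑ i, |v i| * ‖x‖ := by
        refine Finset.sum_le_sum fun i _ => ?_
        rw [norm_mul, Real.norm_eq_abs]
        exact mul_le_mul_of_nonneg_left (norm_le_pi_norm x i) (abs_nonneg _)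
    _ = (∑ i, |v i|) * ‖x‖ := (Finset.sum_mul _ _ _).symm

set_option maxHeartbeats 2000000

/-- Final step in the proof of Proposition 2: with
`Λ_B = -b·A_{θ₀}(w_B)²·∫₀¹ ℂ(u^{w_B}) u⁻¹ du`, `E{ℂ(u)𝕎} = Ċ_{θ₀}(u)`, the
domination condition (A3), continuity of `ϑ ↦ Ċ_ϑ`, and the identity
`∫₀¹ C_θ(u^{w_B}) u⁻¹ du = 1/A_θ(w_B)` near `θ₀`, one has
`E(Λ_B·𝕎) = b·∇A_{θ₀}(w_B) = ∇ξ_{B,θ₀}`. -/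
theorem expectation_lambda_W {Ω : Type*} [MeasurableSpace Ω] (μ : Measure Ω)
    [IsProbabilityMeasure μ] (p d : ℕ)
    (Cfam : (Fin p → ℝ) → (Fin d → ℝ) → ℝ)
    (Cdot : (Fin p → ℝ) → (Fin d → ℝ) → Fin p → ℝ)
    (Afam : (Fin p → ℝ) → ℝ) (gradA : Fin p → ℝ)
    (θ0 : Fin p → ℝ) (b : ℕ) (hb : 2 ≤ b)
    (wB : Fin d → ℝ) (hwB0 : ∀ j, 0 ≤ wB j) (hwB1 : ∑ j, wB j = 1)
    (CC : Ω → (Fin d → ℝ) → ℝ) (W : Ω → Fin p → ℝ)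
    -- `E{ℂ(u)·𝕎} = Ċ_{θ₀}(u)` for all `u ∈ [0,1]^d`
    (hEW : ∀ u : Fin d → ℝ, (∀ j, u j ∈ Set.Icc (0:ℝ) 1) → ∀ i,
      ∫ ω, CC ω u * W ω i ∂μ = Cdot θ0 u i)
    (N : Set (Fin p → ℝ)) (hN : N ∈ nhds θ0)
    -- `Ċ_ϑ(u)` is the gradient in `θ` of `C_θ(u)` on a neighborhood of `θ₀`
    (hderiv : ∀ ϑ ∈ N, ∀ u : Fin d → ℝ, (∀ j, u j ∈ Set.Icc (0:ℝ) 1) →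
      HasFDerivAt (fun θ => Cfam θ u) (gradCLM (Cdot ϑ u)) ϑ)
    -- continuity of `ϑ ↦ Ċ_ϑ`
    (hcont : ∀ u : Fin d → ℝ, (∀ j, u j ∈ Set.Icc (0:ℝ) 1) →
      Continuous fun ϑ => Cdot ϑ u)
    -- condition (A3): locally uniform integrable domination
    (hA3 : ∃ h g : ℝ → ℝ, IntegrableOn h (Set.Ioo 0 1) ∧ IntegrableOn g (Set.Ioo 0 1) ∧
      ∀ u ∈ Set.Ioo (0:ℝ) 1, ∀ ϑ ∈ N, ∀ i,
        |Cdot ϑ (fun j => u ^ wB j) i / u| ≤ h u ∧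
        |Cdot ϑ (fun j => u ^ wB j) i / (u * Real.log u)| ≤ g u)
    -- the identity `∫₀¹ C_θ(u^{w_B}) u⁻¹ du = 1/A_θ(w_B)` near `θ₀`
    (hident : ∀ ϑ ∈ N,
      ∫ u in Set.Ioo (0:ℝ) 1, Cfam ϑ (fun j => u ^ wB j) / u = 1 / Afam ϑ)
    (hAdiff : HasFDerivAt Afam (gradCLM gradA) θ0)
    -- Fubini-type interchange of expectation and the integral over `u`
    (hswap : ∀ i, ∫ ω, (∫ u in Set.Ioo (0:ℝ) 1, CC ω (fun j => u ^ wB j) / u) * W ω i ∂μ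
      = ∫ u in Set.Ioo (0:ℝ) 1, (∫ ω, CC ω (fun j => u ^ wB j) * W ω i ∂μ) / u) :
    ∀ i, ∫ ω, (-(b : ℝ) * (Afam θ0) ^ 2 *
        ∫ u in Set.Ioo (0:ℝ) 1, CC ω (fun j => u ^ wB j) / u) * W ω i ∂μ
      = (b : ℝ) * gradA i := by
  intro i
  classical
  obtain ⟨hdom, gdom, hdomInt, gdomInt, hbnd⟩ := hA3
  set S : Set ℝ := Set.Ioo (0:ℝ) 1 with hSdef
  have hθ0N : θ0 ∈ N := mem_of_mem_nhds hN
  have hpow : ∀ u ∈ S, ∀ j, (u : ℝ) ^ wB j ∈ Set.Icc (0:ℝ) 1 := by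
    intro u hu j
    exact ⟨Real.rpow_nonneg hu.1.le _, Real.rpow_le_one hu.1.le hu.2.le (hwB0 j)⟩
  set v : Fin p → ℝ := Pi.single i 1 with hv
  have hvnorm : ∀ t : ℝ, ‖t • v‖ = |t| := by
    intro t
    rw [norm_smul, Real.norm_eq_abs, hv, Pi.norm_single, norm_one, mul_one]
  have hline : ∀ t : ℝ, HasDerivAt (fun s : ℝ => θ0 + s • v) v t := by
    intro t
    simpa using ((hasDerivAt_id t).smul_const v).const_add θ0
  -- integrability from the identity
  have hFInt : ∀ ϑ ∈ N, Afam ϑ ≠ 0 →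
      IntegrableOn (fun u => Cfam ϑ (fun j => u ^ wB j) / u) S := by
    intro ϑ hϑ hAϑ
    by_contra hni
    have h0 := hident ϑ hϑ
    rw [MeasureTheory.integral_undef hni, eq_comm, one_div, inv_eq_zero] at h0
    exact hAϑ h0
  -- directional derivatives along the line
  have hdir : ∀ t : ℝ, θ0 + t • v ∈ N → ∀ u ∈ S,
      HasDerivAt (fun s : ℝ => Cfam (θ0 + s • v) (fun j => u ^ wB j) / u)
        (Cdot (θ0 + t • v) (fun j => u ^ wB j) i / u) t := by
    intro t ht u hu
    have h1 := (hderiv _ ht _ (hpow u hu)).comp_hasDerivAt t (hline t)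
    rw [gradCLM_single] at h1
    exact h1.div_const u
  by_cases hA0 : Afam θ0 = 0
  · -- degenerate case: show gradA i = 0
    have hgrad0 : gradA i = 0 := by
      by_contra hgi
      obtain ⟨ε, εpos, hball⟩ := Metric.mem_nhds_iff.1 hN
      have hmem' : ∀ t : ℝ, |t| < ε → θ0 + t • v ∈ Metric.ball θ0 ε := by
        intro t ht
        rw [Metric.mem_ball, dist_eq_norm, add_sub_cancel_left, hvnorm]; exact ht
      have hmemball : ∀ t : ℝ, |t| < ε → (θ0 + t • v) ∈ N :=
        fun t ht => hball (hmem' t ht)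
      set c := gradA i with hc
      have hcpos : 0 < |c| := abs_pos.2 hgi
      have hAline : HasDerivAt (fun t : ℝ => Afam (θ0 + t • v)) c 0 := by
        have hAd : HasFDerivAt Afam (gradCLM gradA) (θ0 + (0:ℝ) • v) := by simpa using hAdiff
        have h1 := hAd.comp_hasDerivAt 0 (hline 0)
        rw [gradCLM_single] at h1; exact h1
      have hsl := hasDerivAt_iff_tendsto_slope.1 hAline
      have hev : ∀ᶠ t in nhdsWithin (0:ℝ) {(0:ℝ)}ᶜ,
          |slope (fun t : ℝ => Afam (θ0 + t • v)) 0 t - c| < |c|/2 := by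
        have h2 := Metric.tendsto_nhds.1 hsl (|c|/2) (by positivity)
        filter_upwards [h2] with t ht
        simpa [Real.dist_eq] using ht
      obtain ⟨δ, δpos, hδ⟩ := Metric.mem_nhdsWithin_iff.1 hev
      have hkey : ∀ t : ℝ, 0 < t → t < δ →
          |c|/2 * t ≤ |Afam (θ0 + t • v)| ∧ |Afam (θ0 + t • v)| ≤ 3*|c|/2 * t := by
        intro t ht0 htδ
        have htmem : t ∈ Metric.ball (0:ℝ) δ ∩ {(0:ℝ)}ᶜ :=
          ⟨by simpa [Real.dist_eq, abs_of_pos ht0] using htδ,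
           Set.mem_compl_singleton_iff.2 ht0.ne'⟩
        have h1 := hδ htmem
        rw [Set.mem_setOf_eq] at h1
        have hslope : slope (fun t : ℝ => Afam (θ0 + t • v)) 0 t = Afam (θ0 + t • v) / t := by
          rw [slope_def_field]; simp [hA0]
        rw [hslope] at h1
        have e1 := abs_sub_abs_le_abs_sub (Afam (θ0 + t • v) / t) c
        have e2 := abs_sub_abs_le_abs_sub c (Afam (θ0 + t • v) / t)
        rw [abs_sub_comm] at e2
        rw [abs_div, abs_of_pos ht0] at e1 e2
        constructor
        · have h3 : |c|/2 ≤ |Afam (θ0 + t • v)| / t := by linarith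
          calc |c|/2 * t = (|c|/2) * t := rfl
            _ ≤ (|Afam (θ0 + t • v)| / t) * t := by
                exact mul_le_mul_of_nonneg_right h3 ht0.le
            _ = |Afam (θ0 + t • v)| := by field_simp
        · have h3 : |Afam (θ0 + t • v)| / t ≤ 3*|c|/2 := by linarith
          rw [div_le_iff₀ ht0] at h3
          linarith [h3]
      -- MVT bound on the difference of integrands
      have hMVT : ∀ u ∈ S, ∀ t₁ : ℝ, |t₁| < ε → ∀ t₂ : ℝ, |t₂| < ε →
          |Cfam (θ0 + t₁ • v) (fun j => u ^ wB j) / u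
            - Cfam (θ0 + t₂ • v) (fun j => u ^ wB j) / u|
            ≤ ((p:ℝ) * hdom u) * |t₁ - t₂| := by
        intro u hu t₁ h1 t₂ h2
        have hgb : ∀ ϑ ∈ Metric.ball θ0 ε,
            ‖gradCLM (Cdot ϑ (fun j => u ^ wB j))‖ ≤ (p:ℝ) * (u * hdom u) := by
          intro ϑ hϑ
          refine (gradCLM_norm_le _).trans ?_
          have hcomp : ∀ j : Fin p, |Cdot ϑ (fun j' => u ^ wB j') j| ≤ u * hdom u := by
            intro j
            have hb2 := (hbnd u hu ϑ (hball hϑ) j).1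
            rw [abs_div, abs_of_pos hu.1, div_le_iff₀ hu.1] at hb2
            linarith [hb2]
          calc ∑ j, |Cdot ϑ (fun j' => u ^ wB j') j| ≤ ∑ _j : Fin p, u * hdom u :=
                Finset.sum_le_sum fun j _ => hcomp j
            _ = (p:ℝ) * (u * hdom u) := by
                simp [Finset.sum_const, Finset.card_univ, nsmul_eq_mul]
        have hmvt := Convex.norm_image_sub_le_of_norm_hasFDerivWithin_le
          (f := fun θ => Cfam θ (fun j => u ^ wB j))
          (f' := fun ϑ => gradCLM (Cdot ϑ (fun j => u ^ wB j)))
          (fun ϑ hϑ => ((hderiv ϑ (hball hϑ) _ (hpow u hu))).hasFDerivWithinAt)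
          hgb (convex_ball θ0 ε) (hmem' t₂ h2) (hmem' t₁ h1)
        have hnorm : ‖(θ0 + t₁ • v) - (θ0 + t₂ • v)‖ = |t₁ - t₂| := by
          rw [add_sub_add_left_eq_sub, ← sub_smul, hvnorm]
        rw [hnorm, Real.norm_eq_abs] at hmvt
        rw [div_sub_div_same, abs_div, abs_of_pos hu.1, div_le_iff₀ hu.1]
        calc |Cfam (θ0 + t₁ • v) (fun j => u ^ wB j)
              - Cfam (θ0 + t₂ • v) (fun j => u ^ wB j)|
            ≤ ((p:ℝ) * (u * hdom u)) * |t₁ - t₂| := hmvt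
          _ = (p:ℝ) * hdom u * |t₁ - t₂| * u := by ring
      -- Lipschitz bound on the inverse of Afam along the line, away from 0
      have hGlip : ∀ t₁ : ℝ, |t₁| < ε → Afam (θ0 + t₁ • v) ≠ 0 →
          ∀ t₂ : ℝ, |t₂| < ε → Afam (θ0 + t₂ • v) ≠ 0 →
          |(Afam (θ0 + t₁ • v))⁻¹ - (Afam (θ0 + t₂ • v))⁻¹|
            ≤ ((p:ℝ) * ∫ u in S, hdom u) * |t₁ - t₂| := by
        intro t₁ h1 hA1 t₂ h2 hA2
        have hi1 := hFInt _ (hmemball t₁ h1) hA1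
        have hi2 := hFInt _ (hmemball t₂ h2) hA2
        have hid1 := hident _ (hmemball t₁ h1)
        have hid2 := hident _ (hmemball t₂ h2)
        rw [one_div] at hid1 hid2
        rw [← hid1, ← hid2, ← integral_sub hi1 hi2]
        have hbig := norm_integral_le_of_norm_le (μ := volume.restrict S)
          (f := fun u => Cfam (θ0 + t₁ • v) (fun j => u ^ wB j) / u
            - Cfam (θ0 + t₂ • v) (fun j => u ^ wB j) / u)
          (g := fun u => ((p:ℝ) * hdom u) * |t₁ - t₂|)
          ((hdomInt.const_mul (p:ℝ)).mul_const (|t₁ - t₂|))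
          (by
            filter_upwards [ae_restrict_mem measurableSet_Ioo] with u hu
            rw [Real.norm_eq_abs]
            exact hMVT u hu t₁ h1 t₂ h2)
        rw [Real.norm_eq_abs] at hbig
        refine hbig.trans (le_of_eq ?_)
        rw [integral_mul_const, integral_const_mul]
      set K := (p:ℝ) * ∫ u in S, hdom u with hK
      have hK0 : 0 ≤ K := by
        apply mul_nonneg (Nat.cast_nonneg p)
        apply setIntegral_nonneg measurableSet_Ioo
        intro u hu
        exact le_trans (abs_nonneg _) (hbnd u hu θ0 hθ0N i).1
      have hminpos : 0 < min δ ε := lt_min δpos εpos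
      set s0 := min δ ε / 2 with hs0
      have hs0pos : 0 < s0 := by rw [hs0]; linarith
      have hs0δ : s0 < δ := by
        have h := min_le_left δ ε; rw [hs0]; linarith
      have hs0ε : s0 < ε := by
        have h := min_le_right δ ε; rw [hs0]; linarith
      have hb_s0 := hkey s0 hs0pos hs0δ
      have hAs0ne : Afam (θ0 + s0 • v) ≠ 0 := by
        intro h0
        rw [h0, abs_zero] at hb_s0
        nlinarith [hb_s0.1, hcpos, hs0pos]
      set M := |(Afam (θ0 + s0 • v))⁻¹| + K * s0 with hM
      have hM0 : 0 ≤ M := add_nonneg (abs_nonneg _) (mul_nonneg hK0 hs0pos.le)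
      have haux : 0 < 2/(3 * |c| * (M + 1)) := by positivity
      set t0 := min s0 (2/(3 * |c| * (M + 1))) / 2 with ht0def
      have hmin2 : 0 < min s0 (2/(3 * |c| * (M + 1))) := lt_min hs0pos haux
      have ht0pos : 0 < t0 := by rw [ht0def]; linarith
      have ht0s0 : t0 ≤ s0 := by
        have h := min_le_left s0 (2/(3 * |c| * (M + 1))); rw [ht0def]; linarith
      have ht0small : t0 < 2/(3 * |c| * (M + 1)) := by
        have h := min_le_right s0 (2/(3 * |c| * (M + 1))); rw [ht0def]; linarith
      have hb_t0 := hkey t0 ht0pos (lt_of_le_of_lt ht0s0 hs0δ)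
      have hAt0pos : 0 < |Afam (θ0 + t0 • v)| :=
        lt_of_lt_of_le (by positivity) hb_t0.1
      have hAt0ne : Afam (θ0 + t0 • v) ≠ 0 := by
        intro h0; rw [h0, abs_zero] at hAt0pos; exact lt_irrefl _ hAt0pos
      have habs_t0 : |t0| < ε := by
        rw [abs_of_pos ht0pos]; linarith
      have habs_s0 : |s0| < ε := by
        rw [abs_of_pos hs0pos]; linarith
      have hlip := hGlip t0 habs_t0 hAt0ne s0 habs_s0 hAs0ne
      have habsts : |t0 - s0| ≤ s0 := by
        rw [abs_sub_comm, abs_of_nonneg (by linarith)]; linarith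
      have h5 : |(Afam (θ0 + t0 • v))⁻¹| ≤ M := by
        have htri := abs_sub_abs_le_abs_sub
          ((Afam (θ0 + t0 • v))⁻¹) ((Afam (θ0 + s0 • v))⁻¹)
        have h6 := mul_le_mul_of_nonneg_left habsts hK0
        rw [hM]
        linarith [htri, hlip, h6]
      have h6 : ((3*|c|/2) * t0)⁻¹ ≤ |(Afam (θ0 + t0 • v))⁻¹| := by
        rw [abs_inv]
        apply inv_anti₀ hAt0pos
        calc |Afam (θ0 + t0 • v)| ≤ 3*|c|/2 * t0 := hb_t0.2
          _ = (3*|c|/2) * t0 := rfl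
      have h7 : (3*|c|/2) * t0 < 1/(M+1) := by
        have hcalc : (3*|c|/2) * (2/(3 * |c| * (M + 1))) = 1/(M+1) := by
          field_simp
        calc (3*|c|/2) * t0 < (3*|c|/2) * (2/(3 * |c| * (M + 1))) := by
              exact mul_lt_mul_of_pos_left ht0small (by positivity)
          _ = 1/(M+1) := hcalc
      have h8 : (M+1) < ((3*|c|/2) * t0)⁻¹ := by
        have := inv_strictAnti₀ (by positivity : (0:ℝ) < (3*|c|/2) * t0) h7
        rwa [one_div, inv_inv] at this
      linarith
    rw [hA0, hgrad0, mul_zero]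
    have hzero : (fun ω => (-(b : ℝ) * (0:ℝ) ^ 2 *
        ∫ u in S, CC ω (fun j => u ^ wB j) / u) * W ω i) = fun _ => (0:ℝ) := by
      funext ω; ring
    rw [hzero, integral_zero]
  · -- main case
    have hA0' : Afam θ0 ≠ 0 := hA0
    have hNA : N ∩ {ϑ | Afam ϑ ≠ 0} ∈ nhds θ0 := by
      refine Filter.inter_mem hN ?_
      exact hAdiff.continuousAt.preimage_mem_nhds (compl_singleton_mem_nhds hA0)
    obtain ⟨ε, εpos, hball⟩ := Metric.mem_nhds_iff.1 hNA
    have hmemball : ∀ t : ℝ, |t| < ε → (θ0 + t • v) ∈ N ∧ Afam (θ0 + t • v) ≠ 0 := by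
      intro t ht
      have : θ0 + t • v ∈ Metric.ball θ0 ε := by
        rw [Metric.mem_ball, dist_eq_norm, add_sub_cancel_left, hvnorm]; exact ht
      exact hball this
    have hAESM : ∀ t : ℝ, |t| < ε →
        AEStronglyMeasurable (fun u => Cfam (θ0 + t • v) (fun j => u ^ wB j) / u)
          (volume.restrict S) :=
      fun t ht => (hFInt _ (hmemball t ht).1 (hmemball t ht).2).aestronglyMeasurable
    -- measurability of the Cdot integrand via difference quotients
    have hmeasCdot : AEStronglyMeasurable (fun u => Cdot θ0 (fun j => u ^ wB j) i / u)
        (volume.restrict S) := by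
      set δ : ℕ → ℝ := fun n => (ε/2) * (1/(n+1)) with hδdef
      have hδpos : ∀ n, 0 < δ n := by
        intro n; apply mul_pos (by linarith); positivity
      have hδlt : ∀ n, |δ n| < ε := by
        intro n
        rw [abs_of_pos (hδpos n)]
        have h1 : (1:ℝ)/(n+1) ≤ 1 := by
          rw [div_le_one (by positivity)]; simp
        have h2 : δ n ≤ ε/2 * 1 :=
          mul_le_mul_of_nonneg_left h1 (by linarith)
        simpa using h2.trans_lt (by linarith)
      have hδ0 : Filter.Tendsto δ Filter.atTop (nhdsWithin 0 {x : ℝ | x ≠ 0}) := by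
        apply tendsto_nhdsWithin_of_tendsto_nhds_of_eventually_within
        · have := tendsto_one_div_add_atTop_nhds_zero_nat.const_mul (ε/2)
          simpa [hδdef] using this
        · exact Filter.Eventually.of_forall fun n => (hδpos n).ne'
      refine aestronglyMeasurable_of_tendsto_ae Filter.atTop
        (f := fun n u => (Cfam (θ0 + δ n • v) (fun j => u ^ wB j) / u
          - Cfam θ0 (fun j => u ^ wB j) / u) * (δ n)⁻¹) (fun n => ?_) ?_
      · exact (((hAESM (δ n) (hδlt n)).sub
          (hFInt θ0 hθ0N hA0).aestronglyMeasurable)).mul_const ((δ n)⁻¹)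
      · filter_upwards [ae_restrict_mem measurableSet_Ioo] with u hu
        have hd := hdir 0 (by simpa using hθ0N) u hu
        have hsl := hasDerivAt_iff_tendsto_slope.1 hd
        have h2 := hsl.comp hδ0
        have h3 : (fun n => slope (fun s : ℝ => Cfam (θ0 + s • v) (fun j => u ^ wB j) / u) 0 (δ n))
            = fun n => (Cfam (θ0 + δ n • v) (fun j => u ^ wB j) / u
              - Cfam θ0 (fun j => u ^ wB j) / u) * (δ n)⁻¹ := by
          funext n
          rw [slope_def_field, div_eq_mul_inv]
          simp
        rw [← h3]
        simpa [Function.comp_def] using h2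
    -- derivative under the integral sign
    have key := hasDerivAt_integral_of_dominated_loc_of_deriv_le (μ := volume.restrict S)
      (F := fun t u => Cfam (θ0 + t • v) (fun j => u ^ wB j) / u)
      (F' := fun t u => Cdot (θ0 + t • v) (fun j => u ^ wB j) i / u)
      (x₀ := (0:ℝ)) (bound := hdom) (Metric.ball_mem_nhds (0:ℝ) εpos)
      (by
        filter_upwards [Metric.ball_mem_nhds (0:ℝ) εpos] with t ht
        exact hAESM t (by simpa [Real.dist_eq] using ht))
      (by simpa [IntegrableOn] using hFInt θ0 hθ0N hA0)
      (by simpa using hmeasCdot)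
      (by
        filter_upwards [ae_restrict_mem measurableSet_Ioo] with u hu
        intro t ht
        have := (hbnd u hu _ (hmemball t (by simpa [Real.dist_eq] using ht)).1 i).1
        simpa only [Real.norm_eq_abs] using this)
      hdomInt
      (by
        filter_upwards [ae_restrict_mem measurableSet_Ioo] with u hu
        intro t ht
        exact hdir t (hmemball t (by simpa [Real.dist_eq] using ht)).1 u hu)
    have keyD := key.2
    simp only [zero_smul, add_zero] at keyD
    -- derivative of the inverse of Afam along the line
    have hAline : HasDerivAt (fun t : ℝ => Afam (θ0 + t • v)) (gradA i) 0 := by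
      have hAd : HasFDerivAt Afam (gradCLM gradA) (θ0 + (0:ℝ) • v) := by
        simpa using hAdiff
      have h1 := hAd.comp_hasDerivAt 0 (hline 0)
      rw [gradCLM_single] at h1
      exact h1
    have hkd : HasDerivAt (fun t : ℝ => (Afam (θ0 + t • v))⁻¹)
        (-(gradA i) / (Afam θ0)^2) 0 := by
      have h2 := hAline.inv (by simpa using hA0)
      simpa [Pi.inv_def] using h2
    have heq : (fun t : ℝ => ∫ u in S, Cfam (θ0 + t • v) (fun j => u ^ wB j) / u)
        =ᶠ[nhds (0:ℝ)] fun t => (Afam (θ0 + t • v))⁻¹ := by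
      filter_upwards [Metric.ball_mem_nhds (0:ℝ) εpos] with t ht
      rw [hident _ (hmemball t (by simpa [Real.dist_eq] using ht)).1, one_div]
    have hval : (∫ u in S, Cdot θ0 (fun j => u ^ wB j) i / u)
        = -(gradA i) / (Afam θ0)^2 := by
      exact keyD.unique (hkd.congr_of_eventuallyEq heq)
    -- final computation
    have step1 : ∫ ω, (-(b : ℝ) * (Afam θ0) ^ 2 *
          ∫ u in S, CC ω (fun j => u ^ wB j) / u) * W ω i ∂μ
        = (-(b:ℝ) * (Afam θ0)^2) *
          ∫ ω, (∫ u in S, CC ω (fun j => u ^ wB j) / u) * W ω i ∂μ := by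
      rw [← integral_const_mul]
      congr 1; funext ω; ring
    rw [step1, hswap i]
    have step3 : ∫ u in S, (∫ ω, CC ω (fun j => u ^ wB j) * W ω i ∂μ) / u
        = ∫ u in S, Cdot θ0 (fun j => u ^ wB j) i / u := by
      refine setIntegral_congr_fun measurableSet_Ioo fun u hu => ?_
      rw [hEW _ (hpow u hu) i]
    rw [step3, hval]
    field_simp
end
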